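/- Let 0 < q < p ≤ 1 be reals, n ≥ 1 and m ≥ 1 natural numbers. For every x ∈ (0,1): B_{n,p,q}((t−x)^{m+1}_{p,q}; x) = (p^{m+n} x(1−x)/[n]_{p,q}) · D_{p,q}[ y ↦ B_{n,p,q}((t − y/p)^m_{p,q}; y/p) ](x) + (p^{m+n−1}[m]_{p,q} x(1−x)/[n]_{p,q}) · B_{n,p,q}((t − qx/p)^{m−1}_{p,q}; qx/p) + ([m]_{p,q}(p^n − q^n)x/[n]_{p,q}) · B_{n,p,q}((t−x)^m_{p,q}; x). -/

import Mathlib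

open Finset Set

/-- The `(p,q)`-integer `[k]_{p,q} = (p^k - q^k)/(p - q)` (so `[0]_{p,q} = 0`). -/
noncomputable def pqInt (p q : ℝ) (k : ℕ) : ℝ := (p ^ k - q ^ k) / (p - q)

/-- The `(p,q)`-factorial `[k]_{p,q}! = ∏_{j=1}^k [j]_{p,q}` (`[0]_{p,q}! = 1`). -/
noncomputable def pqFact (p q : ℝ) (k : ℕ) : ℝ := ∏ j ∈ Finset.range k, pqInt p q (j + 1)

/-- The `(p,q)`-binomial coefficient. -/
noncomputable def pqBinom (p q : ℝ) (n k : ℕ) : ℝ :=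
  pqFact p q n / (pqFact p q k * pqFact p q (n - k))

/-- The `(p,q)`-Bernstein basis function
`P_{n,k}(p,q;x) = p^{k(k-1)/2} [n choose k]_{p,q} x^k ∏_{s=0}^{n-k-1} (p^s - q^s x)`. -/
noncomputable def pqBern (p q : ℝ) (n k : ℕ) (x : ℝ) : ℝ :=
  p ^ (k * (k - 1) / 2) * pqBinom p q n k * x ^ k *
    ∏ s ∈ Finset.range (n - k), (p ^ s - q ^ s * x)

/-- The node `x_{n,k} = p^{n-k} [k]_{p,q} / [n]_{p,q}`. -/
noncomputable def pqNode (p q : ℝ) (n k : ℕ) : ℝ := p ^ (n - k) * pqInt p q k / pqInt p q n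

/-- The `(p,q)`-power central moment
`B_{n,p,q}((t-a)^m_{p,q}; y) = p^{-n(n-1)/2} ∑_{k=0}^n (∏_{s=0}^{m-1}(p^s x_{n,k} - q^s a)) P_{n,k}(p,q;y)`. -/
noncomputable def pqPowMoment (p q : ℝ) (n m : ℕ) (a y : ℝ) : ℝ :=
  (p ^ (n * (n - 1) / 2))⁻¹ *
    ∑ k ∈ Finset.range (n + 1),
      (∏ s ∈ Finset.range m, (p ^ s * pqNode p q n k - q ^ s * a)) * pqBern p q n k y

/-- The `m`-th absolute central moment
`B_{n,p,q}(|t-x|^m; x) = p^{-n(n-1)/2} ∑_{k=0}^n |x_{n,k} - x|^m P_{n,k}(p,q;x)`. -/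
noncomputable def pqAbsMoment (p q : ℝ) (n m : ℕ) (x : ℝ) : ℝ :=
  (p ^ (n * (n - 1) / 2))⁻¹ *
    ∑ k ∈ Finset.range (n + 1), |pqNode p q n k - x| ^ m * pqBern p q n k x

/-- The ordinary `m`-th central moment
`B_{n,p,q}((t-x)^m; x) = p^{-n(n-1)/2} ∑_{k=0}^n (x_{n,k} - x)^m P_{n,k}(p,q;x)`. -/
noncomputable def pqMoment (p q : ℝ) (n m : ℕ) (x : ℝ) : ℝ :=
  (p ^ (n * (n - 1) / 2))⁻¹ *
    ∑ k ∈ Finset.range (n + 1), (pqNode p q n k - x) ^ m * pqBern p q n k x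

/-- The `(p,q)`-Bernstein operator `B_{n,p,q}(f;x)`. -/
noncomputable def pqBernstein (p q : ℝ) (n : ℕ) (f : ℝ → ℝ) (x : ℝ) : ℝ :=
  (p ^ (n * (n - 1) / 2))⁻¹ *
    ∑ k ∈ Finset.range (n + 1), f (pqNode p q n k) * pqBern p q n k x

/-- The `r`-th order generalization `B^{[r]}_{n,p,q}(f;x)` where `f^{(i)}` is interpreted as
`iteratedDerivWithin i f (Set.Icc 0 1)`. -/
noncomputable def pqBernsteinR (p q : ℝ) (n r : ℕ) (f : ℝ → ℝ) (x : ℝ) : ℝ :=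
  (p ^ (n * (n - 1) / 2))⁻¹ *
    ∑ k ∈ Finset.range (n + 1), pqBern p q n k x *
      ∑ i ∈ Finset.range (r + 1),
        iteratedDerivWithin i f (Set.Icc 0 1) (pqNode p q n k) / (i.factorial : ℝ) *
          (x - pqNode p q n k) ^ i

/-- The modulus of continuity on `[0,1]`:
`ω(g; δ) = sup { |g u - g v| : u, v ∈ [0,1], |u - v| ≤ δ }`. -/
noncomputable def modulusOfContinuity (g : ℝ → ℝ) (δ : ℝ) : ℝ :=
  sSup {d : ℝ | ∃ u ∈ Set.Icc (0 : ℝ) 1, ∃ v ∈ Set.Icc (0 : ℝ) 1, |u - v| ≤ δ ∧ d = |g u - g v|}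

lemma prodDiff (p q a t : ℝ) (m : ℕ) :
    ∏ s ∈ Finset.range (m+1), (p^s*a - q^s*(p*t)) -
      ∏ s ∈ Finset.range (m+1), (p^s*a - q^(s+1)*t)
      = -((p^(m+1) - q^(m+1)) * t) * ∏ s ∈ Finset.range m, (p^s*a - q^(s+1)*t) := by
  induction m with
  | zero => simp; ring
  | succ m ih =>
    simp only [Finset.prod_range_succ] at ih ⊢
    linear_combination (p^(m+1)*a - q^(m+1)*(p*t)) * ih

lemma pqBern_key (p q : ℝ) (hq : 0 < q) (hqp : q < p) {n k : ℕ} (hk : k ≤ n) (hn : 1 ≤ n)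
    {x : ℝ} (hx : x ∈ Set.Ioo (0:ℝ) 1) :
    (p^n - q^n) * (pqNode p q n k - x) * pqBern p q n k x
      = p^n * (1 - x) * (pqBern p q n k x - pqBern p q n k (q*x/p)) := by
  have hp : 0 < p := hq.trans hqp
  have hpq : p - q ≠ 0 := by linarith
  have hpn : q^n < p^n := pow_lt_pow_left₀ hqp hq.le (by omega)
  have hpn' : p^n - q^n ≠ 0 := by linarith
  obtain ⟨hx0, hx1⟩ := hx
  rcases eq_or_lt_of_le hk with rfl | hlt
  · unfold pqBern pqNode pqInt
    simp only [Nat.sub_self, Finset.range_zero, Finset.prod_empty, pow_zero, one_mul, mul_one]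
    rw [div_self (by exact div_ne_zero hpn' hpq)]
    simp only [div_pow]
    field_simp [hp.ne']
    ring
  · obtain ⟨d, rfl⟩ : ∃ d, n = k + (d+1) := ⟨n - k - 1, by omega⟩
    unfold pqBern pqNode pqInt
    simp only [show k + (d+1) - k = d + 1 from by omega]
    have e2 : ∏ s ∈ Finset.range (d+1), (p^(s+1) - q^(s+1)*x)
        = p^(d+1) * ∏ s ∈ Finset.range (d+1), (p^s - q^s*(q*x/p)) := by
      rw [show (p:ℝ)^(d+1) = ∏ _s ∈ Finset.range (d+1), p by simp, ← Finset.prod_mul_distrib]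
      refine Finset.prod_congr rfl fun s _ => ?_
      field_simp
      ring
    have e1 := Finset.prod_range_succ' (fun s => (p:ℝ)^s - q^s*x) d
    simp only [pow_zero, one_mul] at e1
    have e3 := Finset.prod_range_succ (fun s => (p:ℝ)^(s+1) - q^(s+1)*x) d
    rw [e1, show (∏ s ∈ Finset.range (d+1), ((p:ℝ)^s - q^s*(q*x/p)))
        = (∏ s ∈ Finset.range (d+1), (p^(s+1) - q^(s+1)*x)) / p^(d+1) from by
          rw [e2, mul_div_cancel_left₀ _ (pow_ne_zero _ hp.ne')], e3]
    simp only [div_pow]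
    field_simp [hp.ne']
    ring

lemma pq_step (p q : ℝ) (hq : 0 < q) (hqp : q < p) (n m' : ℕ) (hn : 1 ≤ n)
    {x : ℝ} (hx : x ∈ Set.Ioo (0:ℝ) 1) {k : ℕ} (hk : k ≤ n) :
    (∏ s ∈ Finset.range (m'+1+1), (p^s * pqNode p q n k - q^s * x)) * pqBern p q n k x =
      p^(m'+1+n)*x*(1-x)/pqInt p q n *
        (((∏ s ∈ Finset.range (m'+1), (p^s * pqNode p q n k - q^s * x)) * pqBern p q n k x -
          (∏ s ∈ Finset.range (m'+1), (p^s * pqNode p q n k - q^s * (q*x/p))) *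
            pqBern p q n k (q*x/p)) / ((p-q)*x)) +
      p^(m'+n)*pqInt p q (m'+1)*x*(1-x)/pqInt p q n *
        ((∏ s ∈ Finset.range m', (p^s * pqNode p q n k - q^s * (q*x/p))) *
          pqBern p q n k (q*x/p)) +
      pqInt p q (m'+1)*(p^n - q^n)*x/pqInt p q n *
        ((∏ s ∈ Finset.range (m'+1), (p^s * pqNode p q n k - q^s * x)) * pqBern p q n k x) := by
  have hp : 0 < p := hq.trans hqp
  have hp0 : p ≠ 0 := hp.ne'
  have hpq : p - q ≠ 0 := by linarith
  have hpn : q^n < p^n := pow_lt_pow_left₀ hqp hq.le (by omega)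
  have hpn' : p^n - q^n ≠ 0 := by linarith
  have hpnz : (p:ℝ)^n ≠ 0 := pow_ne_zero _ hp0
  obtain ⟨hx0, hx1⟩ := hx
  have hx0' : x ≠ 0 := hx0.ne'
  have hx1' : (1:ℝ) - x ≠ 0 := by linarith
  have key := pqBern_key p q hq hqp hk hn ⟨hx0, hx1⟩
  have hpd := prodDiff p q (pqNode p q n k) (x/p) m'
  have hcong : ∀ M : ℕ, ∏ s ∈ Finset.range M, (p^s * pqNode p q n k - q^(s+1)*(x/p))
      = ∏ s ∈ Finset.range M, (p^s * pqNode p q n k - q^s * (q*x/p)) := by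
    refine fun M => Finset.prod_congr rfl fun s _ => ?_
    rw [pow_succ]
    ring
  rw [show p*(x/p) = x from by field_simp, hcong (m'+1), hcong m'] at hpd
  set ξ := pqNode p q n k with hξ
  set P := pqBern p q n k x with hP
  set P' := pqBern p q n k (q*x/p) with hP2
  set u := ∏ s ∈ Finset.range (m'+1), (p^s * ξ - q^s * x) with hu
  set w := ∏ s ∈ Finset.range m', (p^s * ξ - q^s * (q*x/p)) with hw
  set v := ∏ s ∈ Finset.range (m'+1), (p^s * ξ - q^s * (q*x/p)) with hv0
  have hv : v = u + ((p^(m'+1) - q^(m'+1)) * (x/p)) * w := by linear_combination -hpd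
  have hP' : P' = P - (p^n - q^n) * (ξ - x) * P / (p^n * (1-x)) := by
    field_simp
    linear_combination key
  rw [Finset.prod_range_succ, hv, hP']
  unfold pqInt
  field_simp
  ring

lemma pq_combine (c S Sa Sb Sc Sd A B C D : ℝ) (h : S = A*((Sa - Sb)/D) + B*Sc + C*Sd) :
    c*S = A*((c*Sa - c*Sb)/D) + B*(c*Sc) + C*(c*Sd) := by rw [h]; ring

/-- the recurrence for the `(p,q)`-power central moments, where the middle
factor of the first summand is the `(p,q)`-derivative at `x` of
`y ↦ B_{n,p,q}((t - y/p)^m_{p,q}; y/p)`. -/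
theorem pq_powMoment_recurrence (p q : ℝ) (hq : 0 < q) (hqp : q < p) (hp : p ≤ 1)
    (n m : ℕ) (hn : 1 ≤ n) (hm : 1 ≤ m) (x : ℝ) (hx : x ∈ Set.Ioo (0 : ℝ) 1) :
    pqPowMoment p q n (m + 1) x x =
      p ^ (m + n) * x * (1 - x) / pqInt p q n *
          ((pqPowMoment p q n m (p * x / p) (p * x / p) -
              pqPowMoment p q n m (q * x / p) (q * x / p)) / ((p - q) * x)) +
        p ^ (m + n - 1) * pqInt p q m * x * (1 - x) / pqInt p q n *
          pqPowMoment p q n (m - 1) (q * x / p) (q * x / p) +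
        pqInt p q m * (p ^ n - q ^ n) * x / pqInt p q n * pqPowMoment p q n m x x := by
  have hp0 : p ≠ 0 := (hq.trans hqp).ne'
  obtain ⟨m', rfl⟩ : ∃ m', m = m' + 1 := ⟨m - 1, by omega⟩
  rw [show p * x / p = x from by field_simp]
  rw [show m' + 1 + n - 1 = m' + n from by omega, show m' + 1 - 1 = m' from by omega]
  unfold pqPowMoment
  refine pq_combine _ _ _ _ _ _ _ _ _ _ ?_
  rw [← Finset.sum_sub_distrib, Finset.sum_div, Finset.mul_sum, Finset.mul_sum,
    Finset.mul_sum, ← Finset.sum_add_distrib, ← Finset.sum_add_distrib]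
  refine Finset.sum_congr rfl fun k hk => ?_
  exact pq_step p q hq hqp n m' hn hx (by simpa [Nat.lt_succ_iff] using hk)
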